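/- Suppose q is prime, p' ≥ 1 is coprime to q, and (p' : G) ∈ N_{p,q}. Then N_{p·p',q} ≤ N_{p,q}; consequently H_{p,q} = G ⧸ N_{p,q} is a quotient of H_{p·p',q} = G ⧸ N_{p·p',q}. -/

import Mathlib

abbrev G : Type := {x : ℚ // 0 < x}

def toG (c : ℕ+) : G := ⟨(c : ℚ), by exact_mod_cast c.pos⟩

def Cmap (p q : ℕ+) (c : ℕ+) : ℕ+ :=
  if h : (q : ℕ) ∣ (c : ℕ) then
    ⟨(c : ℕ) / (q : ℕ), Nat.div_pos (Nat.le_of_dvd c.pos h) q.pos⟩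
  else p * c + 1

def E (p q : ℕ+) : ℕ+ → ℕ+ → Prop := Relation.EqvGen (fun c d => d = Cmap p q c)

def Npq (p q : ℕ+) : Subgroup G :=
  Subgroup.closure ({toG q} ∪ {x : G | ∃ c d : ℕ+, E p q c d ∧ x = toG c / toG d})

lemma mem_of_E (p q : ℕ+) {c d : ℕ+} (hE : E p q c d) : toG c / toG d ∈ Npq p q :=
  Subgroup.subset_closure (Or.inr ⟨c, d, hE, rfl⟩)

lemma q_mem (p q : ℕ+) : toG q ∈ Npq p q :=
  Subgroup.subset_closure (Or.inl rfl)

lemma toG_mul (a b : ℕ+) : toG (a * b) = toG a * toG b := by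
  apply Subtype.ext
  push_cast [toG]
  rfl

lemma key (p p' q : ℕ+) (hq : (q : ℕ).Prime) (hcop : ¬ (q : ℕ) ∣ (p' : ℕ))
    (h : toG p' ∈ Npq p q) : Npq (p * p') q ≤ Npq p q := by
  rw [Npq, Subgroup.closure_le]
  rintro x (rfl | ⟨c, d, hE, rfl⟩)
  · exact q_mem p q
  induction hE with
  | rel c d hstep =>
    subst hstep
    by_cases hd : (q : ℕ) ∣ (c : ℕ)
    · rw [show Cmap (p * p') q c = _ from dif_pos hd]
      have : toG c / toG ⟨(c : ℕ) / (q : ℕ), Nat.div_pos (Nat.le_of_dvd c.pos hd) q.pos⟩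
          = toG q := by
        apply Subtype.ext
        show (c : ℚ) / (((c : ℕ) / (q : ℕ) : ℕ) : ℚ) = (q : ℚ)
        obtain ⟨k, hk⟩ := hd
        have hqk : 0 < (q : ℕ) * k := hk ▸ c.pos
        have hk0 : 0 < k := Nat.pos_of_ne_zero (by rintro rfl; simp at hqk)
        rw [hk]
        rw [Nat.mul_div_cancel_left k q.pos]
        push_cast
        field_simp
      rw [this]
      exact q_mem p q
    · rw [show Cmap (p * p') q c = p * p' * c + 1 from dif_neg hd]
      have hnd : ¬ (q : ℕ) ∣ ((p' * c : ℕ+) : ℕ) := by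
        push_cast
        intro hdvd
        rcases (Nat.Prime.dvd_mul hq).mp hdvd with h1 | h1
        · exact hcop h1
        · exact hd h1
      have hE' : E p q (p' * c) (p * (p' * c) + 1) := Relation.EqvGen.rel _ _ (by
        exact (show Cmap p q (p' * c) = p * (p' * c) + 1 from dif_neg hnd).symm)
      have hm := mem_of_E p q hE'
      have heq : toG c / toG (p * p' * c + 1)
          = (toG (p' * c) / toG (p * (p' * c) + 1)) * (toG p')⁻¹ := by
        rw [mul_assoc]
        apply Subtype.ext
        have h0 : ((toG c / toG (p * (p' * c) + 1)) : G).val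
            = ((c : ℕ+) : ℚ) / ((p * (p' * c) + 1 : ℕ+) : ℚ) := rfl
        have h1 : ((toG (p' * c) / toG (p * (p' * c) + 1)) * (toG p')⁻¹ : G).val
            = ((p' * c : ℕ+) : ℚ) / ((p * (p' * c) + 1 : ℕ+) : ℚ) * ((p' : ℚ))⁻¹ := rfl
        rw [h0, h1]
        push_cast
        have hpos : (0:ℚ) < (p:ℚ) * ((p':ℚ) * (c:ℚ)) + 1 := by positivity
        field_simp
      rw [heq]
      exact mul_mem hm (inv_mem h)
  | refl c => simpa using (Npq p q).one_mem
  | symm c d _ ih =>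
    have : toG d / toG c = (toG c / toG d)⁻¹ := by
      rw [inv_div]
    rw [this]; exact inv_mem ih
  | trans c d e _ _ ih1 ih2 =>
    have heq : (toG c / toG d) * (toG d / toG e) = toG c / toG e :=
      by rw [div_mul_div_comm, mul_comm (toG c) (toG d), mul_div_mul_left_eq_div]
    rw [← heq]
    exact mul_mem ih1 ih2

theorem stmt12 (p p' q : ℕ+) (hp : 1 ≤ p) (hp' : 1 ≤ p') (hq : (q : ℕ).Prime)
    (hcop : ¬ (q : ℕ) ∣ (p' : ℕ)) (h : toG p' ∈ Npq p q) :
    Npq (p * p') q ≤ Npq p q ∧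
      ∃ f : (G ⧸ Npq (p * p') q) →* (G ⧸ Npq p q), Function.Surjective f := by
  have hle := key p p' q hq hcop h
  refine ⟨hle, QuotientGroup.map _ _ (MonoidHom.id G) hle, ?_⟩
  intro x
  obtain ⟨g, rfl⟩ := QuotientGroup.mk'_surjective (Npq p q) x
  exact ⟨QuotientGroup.mk g, rfl⟩
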